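/- Let U ⊆ ℝ^d be convex and for each k ∈ {0,…,j} let S_k ⊆ X with policies π_k : ℝ^n → ℝ^d such that for all x ∈ S_k, π_k x ∈ U and for all w ∈ W, A x + B (π_k x) + w ∈ S_k. Let CS = convexHull ℝ (⋃_{k≤j} S_k). Then there exists a single feedback map κ : ℝ^n → ℝ^d such that for all x ∈ CS, κ x ∈ U and for all w ∈ W, A x + B (κ x) + w ∈ CS; consequently, for every x₀ ∈ CS and every disturbance sequence with values in W, the closed-loop trajectory under κ remains in CS for all times with all inputs in U. -/
import Mathlib


/-- Corollary of Proposition 1 used in Theorem 1: there is a single feedback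
map `κ` keeping the convex safe set `CS = convexHull ℝ (⋃ k, S k)` robustly
invariant with inputs in `U`; consequently every closed-loop trajectory under
`κ` starting in `CS` remains in `CS` with all inputs in `U`. -/
theorem convexSafeSet_safe_policy
    {n d j : ℕ}
    (A : (Fin n → ℝ) →ₗ[ℝ] (Fin n → ℝ)) (B : (Fin d → ℝ) →ₗ[ℝ] (Fin n → ℝ))
    (W X : Set (Fin n → ℝ)) (U : Set (Fin d → ℝ))
    (hU : Convex ℝ U)
    (S : Fin (j + 1) → Set (Fin n → ℝ))
    (π : Fin (j + 1) → (Fin n → ℝ) → (Fin d → ℝ))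
    (hSX : ∀ k, S k ⊆ X)
    (hπU : ∀ k, ∀ x ∈ S k, π k x ∈ U)
    (hInv : ∀ k, ∀ x ∈ S k, ∀ w ∈ W, A x + B (π k x) + w ∈ S k) :
    ∃ κ : (Fin n → ℝ) → (Fin d → ℝ),
      (∀ x ∈ convexHull ℝ (⋃ k, S k), κ x ∈ U ∧
        ∀ w ∈ W, A x + B (κ x) + w ∈ convexHull ℝ (⋃ k, S k)) ∧
      ∀ x₀ ∈ convexHull ℝ (⋃ k, S k), ∀ w : ℕ → (Fin n → ℝ), (∀ k, w k ∈ W) →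
        ∀ x : ℕ → (Fin n → ℝ), x 0 = x₀ →
          (∀ k, x (k + 1) = A (x k) + B (κ (x k)) + w k) →
          ∀ k, x k ∈ convexHull ℝ (⋃ k, S k) ∧ κ (x k) ∈ U := by
  classical
  set CS := convexHull ℝ (⋃ k, S k) with hCS
  set T : Set (Fin n → ℝ) :=
    {x | ∃ u ∈ U, ∀ w ∈ W, A x + B u + w ∈ CS} with hT
  have hconv : Convex ℝ T := by
    rintro x ⟨ux, hux, hx⟩ y ⟨uy, huy, hy⟩ a b ha hb hab
    refine ⟨a • ux + b • uy, hU hux huy ha hb hab, fun w hw => ?_⟩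
    have key : A (a • x + b • y) + B (a • ux + b • uy) + w
        = a • (A x + B ux + w) + b • (A y + B uy + w) := by
      have hw' : (a + b) • w = w := by rw [hab, one_smul]
      calc A (a • x + b • y) + B (a • ux + b • uy) + w
          = A (a • x + b • y) + B (a • ux + b • uy) + (a + b) • w := by rw [hw']
        _ = a • (A x + B ux + w) + b • (A y + B uy + w) := by
            simp only [map_add, map_smul, add_smul, smul_add]; abel
    rw [key]
    exact (convex_convexHull ℝ _) (hx w hw) (hy w hw) ha hb hab
  have hsub : (⋃ k, S k) ⊆ T := by
    rintro x hx
    rcases Set.mem_iUnion.mp hx with ⟨k, hk⟩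
    exact ⟨π k x, hπU k x hk, fun w hw =>
      subset_convexHull ℝ _ (Set.mem_iUnion.mpr ⟨k, hInv k x hk w hw⟩)⟩
  have hCST : CS ⊆ T := convexHull_min hsub hconv
  choose! κ hκU hκInv using fun x (hx : x ∈ T) => hx
  refine ⟨fun x => if hx : x ∈ CS then κ x else 0, fun x hx => ?_, ?_⟩
  · simp only [dif_pos hx]
    exact ⟨hκU x (hCST hx), fun w hw => hκInv x (hCST hx) w hw⟩
  · intro x₀ hx₀ w hw x hx0 hstep k
    have main : ∀ k, x k ∈ CS := by
      intro k
      induction k with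
      | zero => rw [hx0]; exact hx₀
      | succ m ih =>
        rw [hstep m]
        simp only [dif_pos ih]
        exact hκInv (x m) (hCST ih) (w m) (hw m)
    refine ⟨main k, ?_⟩
    simp only [dif_pos (main k)]
    exact hκU (x k) (hCST (main k))
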